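/- Let C > β > 0, b > 0, s ≥ 0, m ≥ 0, D₀ ≥ 0, let t₀ ≤ t₁, and let V : ℝ → ℝ be differentiable with V'(t) ≤ −C·V(t) + (1/(2b))·(s·e^{−βt} + m) + D₀ for all t ∈ [t₀, t₁]. Then for all t ∈ [t₀, t₁]: V(t) ≤ V(t₀)·e^{−C(t−t₀)} + (s/(2b(C−β)))·(e^{−βt} − e^{−βt₀}·e^{−C(t−t₀)}) + ((D₀ + m/(2b))/C)·(1 − e^{−C(t−t₀)}). -/

import Mathlib

theorem comparison_lemma_exponential_bound (C β b s m D₀ t₀ t₁ : ℝ)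
    (hβ : 0 < β) (hCβ : β < C) (hb : 0 < b) (hs : 0 ≤ s) (hm : 0 ≤ m) (hD₀ : 0 ≤ D₀)
    (ht : t₀ ≤ t₁) (V : ℝ → ℝ) (hV : Differentiable ℝ V)
    (hV' : ∀ t ∈ Set.Icc t₀ t₁,
      deriv V t ≤ -C * V t + 1 / (2 * b) * (s * Real.exp (-β * t) + m) + D₀) :
    ∀ t ∈ Set.Icc t₀ t₁,
      V t ≤ V t₀ * Real.exp (-C * (t - t₀))
        + s / (2 * b * (C - β)) *
            (Real.exp (-β * t) - Real.exp (-β * t₀) * Real.exp (-C * (t - t₀)))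
        + (D₀ + m / (2 * b)) / C * (1 - Real.exp (-C * (t - t₀))) := by
  have hCpos : 0 < C := lt_trans hβ hCβ
  have hCne : C ≠ 0 := ne_of_gt hCpos
  have hCβne : C - β ≠ 0 := by linarith
  have hbne : b ≠ 0 := ne_of_gt hb
  set k1 := s / (2 * b * (C - β)) with hk1
  set k2 := (D₀ + m / (2 * b)) / C with hk2
  set B : ℝ → ℝ := fun t => V t₀ * Real.exp (-C * (t - t₀))
      + k1 * (Real.exp (-β * t) - Real.exp (-β * t₀) * Real.exp (-C * (t - t₀)))
      + k2 * (1 - Real.exp (-C * (t - t₀))) with hBdef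
  have hE : ∀ t : ℝ, HasDerivAt (fun t => Real.exp (-C * (t - t₀)))
      (-C * Real.exp (-C * (t - t₀))) t := by
    intro t
    have h1 : HasDerivAt (fun t : ℝ => -C * (t - t₀)) (-C) t := by
      simpa using ((hasDerivAt_id t).sub_const t₀).const_mul (-C)
    simpa [mul_comm] using h1.exp
  have hF : ∀ t : ℝ, HasDerivAt (fun t => Real.exp (-β * t))
      (-β * Real.exp (-β * t)) t := by
    intro t
    have h1 : HasDerivAt (fun t : ℝ => -β * t) (-β) t := by
      simpa using (hasDerivAt_id t).const_mul (-β)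
    simpa [mul_comm] using h1.exp
  have hBderiv : ∀ t : ℝ, HasDerivAt B
      (-C * B t + 1 / (2 * b) * (s * Real.exp (-β * t) + m) + D₀) t := by
    intro t
    have h1 := ((hE t).const_mul (V t₀)).add
      ((((hF t).sub ((hE t).const_mul (Real.exp (-β * t₀)))).const_mul k1).add
        (((hasDerivAt_const t (1 : ℝ)).sub (hE t)).const_mul k2))
    have h2 : HasDerivAt B
        (V t₀ * (-C * Real.exp (-C * (t - t₀)))
          + (k1 * (-β * Real.exp (-β * t) -
              Real.exp (-β * t₀) * (-C * Real.exp (-C * (t - t₀))))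
            + k2 * (0 - -C * Real.exp (-C * (t - t₀))))) t := by
      simpa [hBdef, add_assoc, Pi.add_def] using h1
    convert h2 using 1
    simp only [hBdef, hk1, hk2]
    field_simp
    ring
  set h : ℝ → ℝ := fun t => (V t - B t) * Real.exp (C * t) with hhdef
  have hBdiff : Differentiable ℝ B := fun t => (hBderiv t).differentiableAt
  have hhderiv : ∀ t : ℝ, HasDerivAt h
      ((deriv V t - deriv B t) * Real.exp (C * t)
        + (V t - B t) * (C * Real.exp (C * t))) t := by
    intro t
    have hG : HasDerivAt (fun t => Real.exp (C * t)) (C * Real.exp (C * t)) t := by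
      have h1 : HasDerivAt (fun t : ℝ => C * t) C t := by
        simpa using (hasDerivAt_id t).const_mul C
      simpa [mul_comm] using h1.exp
    exact (((hV t).hasDerivAt).sub (hBdiff t).hasDerivAt).mul hG
  have hanti : AntitoneOn h (Set.Icc t₀ t₁) := by
    apply antitoneOn_of_deriv_nonpos (convex_Icc t₀ t₁)
    · exact (((hV.sub hBdiff).mul (Real.differentiable_exp.comp
        (differentiable_id.const_mul C))).continuous).continuousOn
    · intro t _
      exact ((hhderiv t).differentiableAt).differentiableWithinAt
    · intro t htmem
      rw [interior_Icc] at htmem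
      have htI : t ∈ Set.Icc t₀ t₁ := Set.mem_Icc.mpr ⟨le_of_lt htmem.1, le_of_lt htmem.2⟩
      rw [(hhderiv t).deriv]
      have hVle := hV' t htI
      have hBeq : deriv B t = -C * B t + 1 / (2 * b) * (s * Real.exp (-β * t) + m) + D₀ :=
        (hBderiv t).deriv
      have hexp : 0 < Real.exp (C * t) := Real.exp_pos _
      nlinarith [hexp, mul_le_mul_of_nonneg_right
        (show deriv V t - deriv B t ≤ -C * (V t - B t) by rw [hBeq]; linarith)
        (le_of_lt hexp)]
  intro t htmem
  have ht0 : t₀ ∈ Set.Icc t₀ t₁ := Set.mem_Icc.mpr ⟨le_refl _, ht⟩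
  have := hanti ht0 htmem htmem.1
  have hBt0 : B t₀ = V t₀ := by simp [hBdef]
  have hht0 : h t₀ = 0 := by simp [hhdef, hBt0]
  have hle : (V t - B t) * Real.exp (C * t) ≤ 0 := by
    simpa [hht0] using this
  have hexp : 0 < Real.exp (C * t) := Real.exp_pos _
  have : V t - B t ≤ 0 := nonpos_of_mul_nonpos_right ?_ hexp
  · simpa [hBdef] using sub_nonpos.mp this
  · linarith [hle]
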